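/- arXiv:2507.14504 — 2 statements merged into one kernel-verified Lean document; each statement's English description precedes it below -/
import Mathlib

section
/- Let G be a finite simple graph with m edges in which every vertex has degree between 2 and 4, and every degree-4 vertex has at most 2 neighbors of degree 4. Let n3 and n4 be the numbers of vertices of degree 3 and 4 respectively. Then n3 + 2·n4 ≤ (8/9)·m. -/
open Finset

/-- The subgraph of `G` on edges whose both endpoints have degree 4. -/
def sub4 {V : Type} [Fintype V] [DecidableEq V] (G : SimpleGraph V)
    [DecidableRel G.Adj] : SimpleGraph V where
  Adj x y := G.Adj x y ∧ G.degree x = 4 ∧ G.degree y = 4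
  symm := ⟨fun x y ⟨h, hx, hy⟩ => ⟨h.symm, hy, hx⟩⟩
  loopless := ⟨fun x ⟨h, _⟩ => G.loopless.irrefl x h⟩

instance sub4.decRel {V : Type} [Fintype V] [DecidableEq V] (G : SimpleGraph V)
    [DecidableRel G.Adj] : DecidableRel (sub4 G).Adj := fun a b =>
  inferInstanceAs (Decidable (G.Adj a b ∧ G.degree a = 4 ∧ G.degree b = 4))

theorem n3_plus_2n4_bound {V : Type} [Fintype V] [DecidableEq V]
    (G : SimpleGraph V) [DecidableRel G.Adj]
    (hmax : ∀ v : V, G.degree v ≤ 4)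
    (hmin : ∀ v : V, 2 ≤ G.degree v)
    (hN4 : ∀ x : V, G.degree x = 4 →
      ((G.neighborFinset x).filter fun y => G.degree y = 4).card ≤ 2) :
    ((Finset.univ.filter fun v : V => G.degree v = 3).card
      + 2 * (Finset.univ.filter fun v : V => G.degree v = 4).card : ℝ)
      ≤ (8 / 9) * G.edgeFinset.card := by
  classical
  set n3 := (Finset.univ.filter fun v : V => G.degree v = 3).card with hn3
  set n4 := (Finset.univ.filter fun v : V => G.degree v = 4).card with hn4
  set m := G.edgeFinset.card with hm
  -- Step 1: 3*n3 + 4*n4 ≤ 2*m (handshake)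
  have hsum : ∑ v : V, G.degree v = 2 * m := G.sum_degrees_eq_twice_card_edges
  have h1 : 3 * n3 + 4 * n4 ≤ 2 * m := by
    rw [← hsum]
    have hdisj : Disjoint (Finset.univ.filter fun v : V => G.degree v = 3)
        (Finset.univ.filter fun v : V => G.degree v = 4) := by
      rw [Finset.disjoint_filter]
      intro v _ h3 h4
      omega
    calc 3 * n3 + 4 * n4
        = (∑ v ∈ Finset.univ.filter fun v : V => G.degree v = 3, G.degree v)
          + (∑ v ∈ Finset.univ.filter fun v : V => G.degree v = 4, G.degree v) := by
          rw [Finset.sum_congr rfl (fun v hv => (Finset.mem_filter.mp hv).2),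
            Finset.sum_congr rfl (fun v hv => (Finset.mem_filter.mp hv).2)]
          simp [mul_comm, hn3, hn4]
      _ = ∑ v ∈ ((Finset.univ.filter fun v : V => G.degree v = 3)
            ∪ (Finset.univ.filter fun v : V => G.degree v = 4)), G.degree v := by
          rw [Finset.sum_union hdisj]
      _ ≤ ∑ v : V, G.degree v := by
          apply Finset.sum_le_sum_of_subset (Finset.subset_univ _)
  -- Step 2: edge count of sub4 is ≤ n4
  have hE' : 2 * (sub4 G).edgeFinset.card ≤ 2 * n4 := by
    rw [← (sub4 G).sum_degrees_eq_twice_card_edges]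
    have hbound : ∀ v : V, (sub4 G).degree v ≤ if G.degree v = 4 then 2 else 0 := by
      intro v
      by_cases hv : G.degree v = 4
      · simp only [hv, if_pos]
        have hsub : (sub4 G).neighborFinset v ⊆
            (G.neighborFinset v).filter fun y => G.degree y = 4 := by
          intro y hy
          rw [SimpleGraph.mem_neighborFinset] at hy
          obtain ⟨hadj, _, hy4⟩ := hy
          rw [Finset.mem_filter, SimpleGraph.mem_neighborFinset]
          exact ⟨hadj, hy4⟩
        calc (sub4 G).degree v = ((sub4 G).neighborFinset v).card := rfl
          _ ≤ _ := Finset.card_le_card hsub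
          _ ≤ 2 := hN4 v hv
      · rw [if_neg hv, ← SimpleGraph.card_neighborFinset_eq_degree, Nat.le_zero,
          Finset.card_eq_zero]
        ext y
        simp only [SimpleGraph.mem_neighborFinset, Finset.notMem_empty, iff_false]
        intro hy
        exact hv hy.2.1
    calc ∑ v : V, (sub4 G).degree v
        ≤ ∑ v : V, if G.degree v = 4 then 2 else 0 := Finset.sum_le_sum fun v _ => hbound v
      _ = 2 * n4 := by
          rw [← Finset.sum_filter, Finset.sum_const, smul_eq_mul, mul_comm, hn4]
  -- Step 3: count darts starting at degree-4 vertices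
  set D : Finset G.Dart := Finset.univ.filter (fun d => G.degree d.fst = 4) with hD
  have hDcard : D.card = 4 * n4 := by
    rw [Finset.card_eq_sum_card_fiberwise (f := fun d : G.Dart => d.fst)
      (t := Finset.univ) (fun d _ => Finset.mem_univ _)]
    have key : ∀ v : V, (D.filter fun d => d.fst = v).card =
        if G.degree v = 4 then 4 else 0 := by
      intro v
      by_cases hv : G.degree v = 4
      · rw [if_pos hv]
        have : D.filter (fun d => d.fst = v) =
            Finset.univ.filter (fun d : G.Dart => d.fst = v) := by
          ext d
          simp only [hD, Finset.mem_filter, Finset.mem_univ, true_and]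
          constructor
          · rintro ⟨_, h⟩; exact h
          · rintro rfl; exact ⟨hv, rfl⟩
        rw [this]
        rw [show (Finset.univ.filter fun d : G.Dart => d.fst = v) =
          ({d : G.Dart | d.fst = v} : Finset _) from rfl]
        rw [G.dart_fst_fiber_card_eq_degree v, hv]
      · rw [if_neg hv]
        rw [Finset.card_eq_zero]
        ext d
        simp only [hD, Finset.mem_filter, Finset.mem_univ, true_and,
          Finset.notMem_empty, iff_false]
        rintro ⟨h4, rfl⟩
        exact hv h4
    rw [Finset.sum_congr rfl fun v _ => key v, ← Finset.sum_filter, Finset.sum_const,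
      smul_eq_mul, mul_comm, hn4]
  have hDle : D.card ≤ m + (sub4 G).edgeFinset.card := by
    rw [Finset.card_eq_sum_card_fiberwise (f := fun d : G.Dart => d.edge)
      (t := G.edgeFinset) (fun d hd => by
        rw [Finset.mem_coe, SimpleGraph.mem_edgeFinset]; exact d.edge_mem)]
    have key : ∀ e ∈ G.edgeFinset, (D.filter fun d => d.edge = e).card ≤
        if e ∈ (sub4 G).edgeFinset then 2 else 1 := by
      intro e he
      by_cases hE : e ∈ (sub4 G).edgeFinset
      · rw [if_pos hE]
        calc (D.filter fun d => d.edge = e).card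
            ≤ (Finset.univ.filter fun d : G.Dart => d.edge = e).card := by
              apply Finset.card_le_card
              intro d hd
              simp only [Finset.mem_filter, Finset.mem_univ, true_and]
              exact (Finset.mem_filter.mp hd).2
          _ = 2 := G.dart_edge_fiber_card e (SimpleGraph.mem_edgeFinset.mp he)
      · rw [if_neg hE]
        rw [Finset.card_le_one]
        intro d1 h1' d2 h2'
        simp only [hD, Finset.mem_filter, Finset.mem_univ, true_and] at h1' h2'
        obtain ⟨hd1, he1⟩ := h1'
        obtain ⟨hd2, he2⟩ := h2'
        have hee : d1.edge = d2.edge := he1.trans he2.symm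
        rcases (SimpleGraph.dart_edge_eq_iff d1 d2).mp hee with h | h
        · exact h
        · exfalso
          apply hE
          rw [SimpleGraph.mem_edgeFinset, ← he2]
          have hsnd : d2.snd = d1.fst := by rw [h]; rfl
          have : (sub4 G).Adj d2.fst d2.snd := ⟨d2.adj, hd2, by rw [hsnd]; exact hd1⟩
          exact this
    calc ∑ e ∈ G.edgeFinset, (D.filter fun d => d.edge = e).card
        ≤ ∑ e ∈ G.edgeFinset, if e ∈ (sub4 G).edgeFinset then 2 else 1 :=
          Finset.sum_le_sum key
      _ ≤ ∑ e ∈ G.edgeFinset, (1 + if e ∈ (sub4 G).edgeFinset then 1 else 0) := by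
          apply Finset.sum_le_sum
          intro e _
          split <;> omega
      _ = m + (G.edgeFinset.filter fun e => e ∈ (sub4 G).edgeFinset).card := by
          rw [Finset.sum_add_distrib, Finset.sum_const, smul_eq_mul, mul_one,
            ← Finset.sum_filter, Finset.sum_const, smul_eq_mul, mul_one, hm]
      _ ≤ m + (sub4 G).edgeFinset.card := by
          have : (G.edgeFinset.filter fun e => e ∈ (sub4 G).edgeFinset).card
              ≤ (sub4 G).edgeFinset.card :=
            Finset.card_le_card fun e he => (Finset.mem_filter.mp he).2
          omega
  -- combine: 3 * n4 ≤ m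
  have h2 : 3 * n4 ≤ m := by
    have := hDcard ▸ hDle
    omega
  -- final arithmetic
  have hfinal : 9 * (n3 + 2 * n4) ≤ 8 * m := by omega
  have : (9 : ℝ) * (n3 + 2 * n4) ≤ 8 * m := by exact_mod_cast hfinal
  push_cast
  linarith
end

section
/- Let p, q, a1, a2 be positive real numbers with a1 + a2 ≥ p, a1 ≥ q, a2 ≥ q, and p ≥ 2q. Then the branching factor τ(a1, a2) is at most τ(q, p − q), where τ(b1, b2) denotes the unique real root x > 1 of the equation x^{−b1} + x^{−b2} = 1. -/
theorem branching_vector_dominance (p q a1 a2 : ℝ)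
    (hp : 0 < p) (hq : 0 < q) (ha1 : 0 < a1) (ha2 : 0 < a2)
    (hsum : p ≤ a1 + a2) (h1 : q ≤ a1) (h2 : q ≤ a2) (hpq : 2 * q ≤ p)
    (x y : ℝ) (hx : 1 < x) (hxroot : x ^ (-a1) + x ^ (-a2) = 1)
    (hy : 1 < y) (hyroot : y ^ (-q) + y ^ (-(p - q)) = 1) :
    x ≤ y := by
  by_contra h
  push_neg at h
  have hx0 : (0:ℝ) < x := lt_trans one_pos hx
  have hy0 : (0:ℝ) < y := lt_trans one_pos hy
  have hrw : ∀ (z : ℝ), 0 < z → ∀ a : ℝ, z ^ (-a) = (z⁻¹) ^ a := by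
    intro z hz a
    rw [Real.rpow_neg hz.le, ← Real.inv_rpow hz.le]
  set u := y⁻¹ with hu
  set v := x⁻¹ with hv
  have hu0 : 0 < u := inv_pos.mpr hy0
  have hv0 : 0 < v := inv_pos.mpr hx0
  have hu1 : u < 1 := by rw [hu, inv_lt_one_iff₀]; right; exact hy
  have hvu : v < u := by
    rw [hu, hv]
    exact inv_strictAnti₀ hy0 h
  -- key inequality: u^a1 + u^a2 ≤ u^q + u^(p-q)
  have hA : u ^ a1 + u ^ a2 ≤ u ^ q + u ^ (a1 + a2 - q) := by
    have h1' : u ^ a1 ≤ u ^ q := Real.rpow_le_rpow_of_exponent_ge hu0 hu1.le h1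
    have h2' : u ^ (a2 - q) ≤ 1 := Real.rpow_le_one hu0.le hu1.le (by linarith)
    have e1 : u ^ a2 = u ^ (a2 - q) * u ^ q := by
      rw [← Real.rpow_add hu0]; ring_nf
    have e2 : u ^ (a1 + a2 - q) = u ^ (a2 - q) * u ^ a1 := by
      rw [← Real.rpow_add hu0]; ring_nf
    rw [e1, e2]
    nlinarith [Real.rpow_nonneg hu0.le (a2 - q)]
  have hB : u ^ (a1 + a2 - q) ≤ u ^ (p - q) :=
    Real.rpow_le_rpow_of_exponent_ge hu0 hu1.le (by linarith)
  have hC : v ^ a1 < u ^ a1 := Real.rpow_lt_rpow hv0.le hvu ha1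
  have hD : v ^ a2 < u ^ a2 := Real.rpow_lt_rpow hv0.le hvu ha2
  have hxr : v ^ a1 + v ^ a2 = 1 := by
    rw [hv, ← hrw x hx0 a1, ← hrw x hx0 a2]; exact hxroot
  have hyr : u ^ q + u ^ (p - q) = 1 := by
    rw [hu, ← hrw y hy0 q, ← hrw y hy0 (p - q)]; exact hyroot
  linarith
end
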